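/- Let n ≥ 2 and R₀ > 0. For every ε > 0 there exists δ > 0 such that if F ⊂ B_{R₀} is a bounded measurable set with |F Δ B₁| < δ, then every point y_F achieving max_{y} ∫_F |x−y|^{−1} dx satisfies |y_F| < ε. -/

import Mathlib

open MeasureTheory Metric Set
open scoped ENNReal MeasureTheory RealInnerProductSpace

/-- Euclidean space ℝⁿ. -/
abbrev V (n : ℕ) := EuclideanSpace ℝ (Fin n)

/-- Divergence of a vector field on ℝⁿ. -/
noncomputable def vdiv {n : ℕ} (φ : V n → V n) (x : V n) : ℝ :=
  ∑ i, fderiv ℝ φ x (EuclideanSpace.single i 1) i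

/-- The admissible values in the variational definition of the relative perimeter
of `F` in the open set `U`. -/
def perSet {n : ℕ} (F U : Set (V n)) : Set ℝ :=
  {a | ∃ φ : V n → V n, ContDiff ℝ 1 φ ∧ HasCompactSupport φ ∧
    (∀ x, ‖φ x‖ ≤ 1) ∧ tsupport φ ⊆ U ∧ a = ∫ x in F, vdiv φ x}

/-- Relative perimeter of `F` in `U` (De Giorgi's variational definition). -/
noncomputable def perimeterIn {n : ℕ} (F U : Set (V n)) : ℝ := sSup (perSet F U)

/-- Perimeter of `F` in all of ℝⁿ. -/
noncomputable def perimeter {n : ℕ} (F : Set (V n)) : ℝ := perimeterIn F univ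

/-- `F` is a set of finite perimeter. -/
def HasFinitePerimeter {n : ℕ} (F : Set (V n)) : Prop :=
  MeasurableSet F ∧ BddAbove (perSet F univ)

/-- ω_n, the volume of the unit ball of ℝⁿ. -/
noncomputable def unitBallVol (n : ℕ) : ℝ := (volume (ball (0 : V n) 1)).toReal



namespace Stmt11Aux

noncomputable def K (n : ℕ) (y : V n) (A : Set (V n)) : ℝ≥0∞ :=
  ∫⁻ x in A, ENNReal.ofReal ‖x - y‖⁻¹

lemma meas_f (n : ℕ) (y : V n) : Measurable (fun x : V n => ‖x - y‖⁻¹) :=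
  ((measurable_id.sub_const y).norm).inv

lemma vol_ball (n : ℕ) [NeZero n] {s : ℝ} (hs : 0 ≤ s) :
    volume (ball (0 : V n) s) = ENNReal.ofReal (s ^ n) * volume (ball (0 : V n) 1) := by
  have : Nontrivial (V n) := by
    have : 0 < n := Nat.pos_of_ne_zero (NeZero.ne n)
    exact ⟨⟨EuclideanSpace.single ⟨0, this⟩ 1, 0, by
      intro h
      have := congrArg (fun f => f ⟨0, this⟩) h
      simpa using this⟩⟩
  rw [Measure.addHaar_ball _ _ hs, finrank_euclideanSpace_fin]

lemma layercake (n : ℕ) (y : V n) (A : Set (V n)) (hA : MeasurableSet A) :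
    K n y A = ∫⁻ t in Ioi (0:ℝ), volume ({x | t < ‖x - y‖⁻¹} ∩ A) := by
  rw [K, lintegral_eq_lintegral_meas_lt _
    (ae_of_all _ fun x => inv_nonneg.2 (norm_nonneg _)) (meas_f n y).aemeasurable]
  refine lintegral_congr fun t => ?_
  rw [Measure.restrict_apply (measurableSet_lt measurable_const (meas_f n y))]

lemma subset_ball {n : ℕ} (y : V n) {t : ℝ} (ht : 0 < t) :
    {x : V n | t < ‖x - y‖⁻¹} ⊆ ball y t⁻¹ := by
  intro x hx
  simp only [mem_setOf_eq] at hx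
  rw [mem_ball, dist_eq_norm]
  rcases eq_or_lt_of_le (norm_nonneg (x - y)) with h | h
  · rw [← h]; exact inv_pos.2 ht
  · have h2 : (0:ℝ) < ‖x - y‖⁻¹ := ht.trans hx
    calc ‖x - y‖ = (‖x - y‖⁻¹)⁻¹ := (inv_inv _).symm
    _ < t⁻¹ := by exact inv_strictAnti₀ ht hx

end Stmt11Aux

namespace Stmt11Aux

lemma K_le_of_small (n : ℕ) (hn : 2 ≤ n) (y : V n) {A : Set (V n)} {r : ℝ}
    (hr0 : 0 < r) (hr1 : r ≤ 1) (hA : MeasurableSet A)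
    (hvol : volume A ≤ volume (ball (0 : V n) r)) :
    K n y A ≤ 2 * volume (ball (0 : V n) 1) * ENNReal.ofReal r := by
  have : NeZero n := ⟨by omega⟩
  set ω := volume (ball (0 : V n) 1) with hω
  have hωfin : ω ≠ ∞ := measure_ball_lt_top.ne
  -- pointwise bound on tail measures
  have key : ∀ t : ℝ, 0 < t →
      volume ({x : V n | t < ‖x - y‖⁻¹} ∩ A) ≤ ENNReal.ofReal (min r t⁻¹ ^ n) * ω := by
    intro t ht
    have hmin0 : 0 ≤ min r t⁻¹ := le_min hr0.le (inv_pos.2 ht).le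
    rcases le_total r t⁻¹ with h | h
    · rw [min_eq_left h]
      calc volume ({x : V n | t < ‖x - y‖⁻¹} ∩ A) ≤ volume A := measure_mono inter_subset_right
      _ ≤ volume (ball (0 : V n) r) := hvol
      _ = ENNReal.ofReal (r ^ n) * ω := vol_ball n hr0.le
    · rw [min_eq_right h]
      calc volume ({x : V n | t < ‖x - y‖⁻¹} ∩ A)
          ≤ volume (ball y t⁻¹) :=
            measure_mono (inter_subset_left.trans (subset_ball y ht))
      _ = volume (ball (0 : V n) t⁻¹) := Measure.addHaar_ball_center _ _ _
      _ = ENNReal.ofReal (t⁻¹ ^ n) * ω := vol_ball n (inv_pos.2 ht).le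
  rw [layercake n y A hA]
  have step1 : ∫⁻ t in Ioi (0:ℝ), volume ({x : V n | t < ‖x - y‖⁻¹} ∩ A)
      ≤ ∫⁻ t in Ioi (0:ℝ), ENNReal.ofReal (min r t⁻¹ ^ n) * ω := by
    refine lintegral_mono_ae ?_
    filter_upwards [ae_restrict_mem measurableSet_Ioi] with t ht
    exact key t ht
  refine step1.trans ?_
  have hrinv : (0:ℝ) < r⁻¹ := inv_pos.2 hr0
  have hsplit : ∫⁻ t in Ioi (0:ℝ), ENNReal.ofReal (min r t⁻¹ ^ n) * ω
      ≤ (∫⁻ t in Ioc (0:ℝ) r⁻¹, ENNReal.ofReal (min r t⁻¹ ^ n) * ω)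
        + ∫⁻ t in Ioi r⁻¹, ENNReal.ofReal (min r t⁻¹ ^ n) * ω := by
    refine le_trans (lintegral_mono_set ?_) (lintegral_union_le _ _ _)
    intro t ht
    rcases le_or_gt t r⁻¹ with h | h
    · exact Or.inl ⟨ht, h⟩
    · exact Or.inr h
  refine hsplit.trans ?_
  have part1 : (∫⁻ t in Ioc (0:ℝ) r⁻¹, ENNReal.ofReal (min r t⁻¹ ^ n) * ω)
      ≤ ω * ENNReal.ofReal r := by
    have hb : ∀ t ∈ Ioc (0:ℝ) r⁻¹, ENNReal.ofReal (min r t⁻¹ ^ n) * ω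
        ≤ ENNReal.ofReal (r ^ n) * ω := by
      intro t ht
      have : min r t⁻¹ ^ n ≤ r ^ n :=
        pow_le_pow_left₀ (le_min hr0.le (inv_pos.2 ht.1).le) (min_le_left _ _) n
      exact mul_le_mul_left (ENNReal.ofReal_le_ofReal this) ω
    calc (∫⁻ t in Ioc (0:ℝ) r⁻¹, ENNReal.ofReal (min r t⁻¹ ^ n) * ω)
        ≤ ∫⁻ _ in Ioc (0:ℝ) r⁻¹, ENNReal.ofReal (r ^ n) * ω := by
          refine lintegral_mono_ae ?_
          filter_upwards [ae_restrict_mem measurableSet_Ioc] with t ht using hb t ht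
      _ = ENNReal.ofReal (r ^ n) * ω * volume (Ioc (0:ℝ) r⁻¹) := by
          rw [setLIntegral_const]
      _ = ω * (ENNReal.ofReal (r ^ n) * ENNReal.ofReal r⁻¹) := by
          rw [Real.volume_Ioc, sub_zero]; ring
      _ = ω * ENNReal.ofReal (r ^ n * r⁻¹) := by
          rw [ENNReal.ofReal_mul (pow_nonneg hr0.le n)]
      _ ≤ ω * ENNReal.ofReal r := by
          refine mul_le_mul_right (ENNReal.ofReal_le_ofReal ?_) ω
          have h1 : r ^ n * r⁻¹ = r ^ (n - 1) := by
            have : n = (n - 1) + 1 := by omega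
            rw [this, pow_succ]
            field_simp
            rw [Nat.add_sub_cancel]
          rw [h1]
          calc r ^ (n - 1) ≤ r ^ 1 := pow_le_pow_of_le_one hr0.le hr1 (by omega)
          _ = r := pow_one r
  have part2 : (∫⁻ t in Ioi r⁻¹, ENNReal.ofReal (min r t⁻¹ ^ n) * ω)
      ≤ ω * ENNReal.ofReal r := by
    have hne : -(n:ℝ) < -1 := by
      have : (2:ℝ) ≤ (n:ℝ) := by exact_mod_cast hn
      linarith
    have hint : IntegrableOn (fun t : ℝ => t ^ (-(n:ℝ))) (Ioi r⁻¹) :=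
      integrableOn_Ioi_rpow_of_lt hne hrinv
    have hcongr : ∀ t ∈ Ioi r⁻¹, ENNReal.ofReal (min r t⁻¹ ^ n) ≤ ENNReal.ofReal (t ^ (-(n:ℝ))) := by
      intro t ht
      have ht0 : (0:ℝ) < t := hrinv.trans ht
      have h1 : min r t⁻¹ ^ n ≤ t⁻¹ ^ n :=
        pow_le_pow_left₀ (le_min hr0.le (inv_pos.2 ht0).le) (min_le_right _ _) n
      have h2 : t⁻¹ ^ n = t ^ (-(n:ℝ)) := by
        rw [Real.rpow_neg ht0.le, Real.rpow_natCast, inv_pow]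
      exact ENNReal.ofReal_le_ofReal (h1.trans h2.le)
    calc (∫⁻ t in Ioi r⁻¹, ENNReal.ofReal (min r t⁻¹ ^ n) * ω)
        ≤ ∫⁻ t in Ioi r⁻¹, ENNReal.ofReal (t ^ (-(n:ℝ))) * ω := by
          refine lintegral_mono_ae ?_
          filter_upwards [ae_restrict_mem measurableSet_Ioi] with t ht
          exact mul_le_mul_left (hcongr t ht) ω
      _ = (∫⁻ t in Ioi r⁻¹, ENNReal.ofReal (t ^ (-(n:ℝ)))) * ω := by
          rw [lintegral_mul_const]
          exact Measurable.ennreal_ofReal (by fun_prop)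
      _ = ENNReal.ofReal (∫ t in Ioi r⁻¹, t ^ (-(n:ℝ))) * ω := by
          rw [← ofReal_integral_eq_lintegral_ofReal hint]
          filter_upwards [ae_restrict_mem measurableSet_Ioi] with t ht
          exact Real.rpow_nonneg (hrinv.trans ht).le _
      _ ≤ ω * ENNReal.ofReal r := by
          rw [integral_Ioi_rpow_of_lt hne hrinv, mul_comm]
          refine mul_le_mul_right (ENNReal.ofReal_le_ofReal ?_) ω
          have hn1 : (1:ℝ) ≤ (n:ℝ) - 1 := by
            have : (2:ℝ) ≤ (n:ℝ) := by exact_mod_cast hn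
            linarith
          have e1 : -(r⁻¹) ^ (-(n:ℝ) + 1) / (-(n:ℝ) + 1) = (r⁻¹) ^ (-(n:ℝ) + 1) / ((n:ℝ) - 1) := by
            rw [div_eq_div_iff] <;> [ring; linarith; linarith]
          rw [e1]
          have e2 : (r⁻¹ : ℝ) ^ (-(n:ℝ) + 1) = r ^ ((n:ℝ) - 1) := by
            rw [Real.inv_rpow hr0.le, ← Real.rpow_neg hr0.le]
            congr 1; ring
          rw [e2]
          calc r ^ ((n:ℝ) - 1) / ((n:ℝ) - 1) ≤ r ^ ((n:ℝ) - 1) := by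
                apply div_le_self (Real.rpow_nonneg hr0.le _) hn1
          _ ≤ r ^ (1:ℝ) := Real.rpow_le_rpow_of_exponent_ge hr0 hr1 hn1
          _ = r := Real.rpow_one r
  calc (∫⁻ t in Ioc (0:ℝ) r⁻¹, ENNReal.ofReal (min r t⁻¹ ^ n) * ω)
        + (∫⁻ t in Ioi r⁻¹, ENNReal.ofReal (min r t⁻¹ ^ n) * ω)
      ≤ ω * ENNReal.ofReal r + ω * ENNReal.ofReal r := add_le_add part1 part2
    _ = 2 * ω * ENNReal.ofReal r := by ring

end Stmt11Aux

namespace Stmt11Aux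

lemma K_mono (n : ℕ) (y : V n) {A B : Set (V n)} (h : A ⊆ B) : K n y A ≤ K n y B :=
  lintegral_mono_set h

lemma K_union_le (n : ℕ) (y : V n) (A B : Set (V n)) : K n y (A ∪ B) ≤ K n y A + K n y B :=
  lintegral_union_le _ _ _

lemma K_ne_top (n : ℕ) (hn : 2 ≤ n) (y : V n) {A : Set (V n)} (hA : MeasurableSet A)
    (hfin : volume A ≠ ∞) : K n y A ≠ ∞ := by
  have h1 : K n y A ≤ K n y (A ∩ ball y 1) + K n y (A \ ball y 1) := by
    refine le_trans (K_mono n y ?_) (K_union_le n y _ _)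
    intro x hx
    rcases em (x ∈ ball y 1) with h | h
    · exact Or.inl ⟨hx, h⟩
    · exact Or.inr ⟨hx, h⟩
  have h2 : K n y (A ∩ ball y 1) ≤ 2 * volume (ball (0 : V n) 1) * ENNReal.ofReal 1 := by
    refine K_le_of_small n hn y one_pos le_rfl (hA.inter measurableSet_ball) ?_
    calc volume (A ∩ ball y 1) ≤ volume (ball y 1) := measure_mono inter_subset_right
    _ = volume (ball (0 : V n) 1) := Measure.addHaar_ball_center _ _ _
  have h3 : K n y (A \ ball y 1) ≤ 1 * volume (A \ ball y 1) := by
    rw [K, ← setLIntegral_const]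
    refine lintegral_mono_ae ?_
    filter_upwards [ae_restrict_mem (hA.diff measurableSet_ball)] with x hx
    have : (1:ℝ) ≤ ‖x - y‖ := by
      have := hx.2
      rw [mem_ball, dist_eq_norm] at this
      linarith [not_lt.1 this]
    calc ENNReal.ofReal ‖x - y‖⁻¹ ≤ ENNReal.ofReal 1 :=
          ENNReal.ofReal_le_ofReal (inv_le_one_of_one_le₀ this)
    _ = 1 := ENNReal.ofReal_one
  refine ne_top_of_le_ne_top ?_ (h1.trans (add_le_add h2 h3))
  refine ENNReal.add_ne_top.2 ⟨?_, ?_⟩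
  · exact ENNReal.mul_ne_top (ENNReal.mul_ne_top (by simp) measure_ball_lt_top.ne) (by simp)
  · rw [one_mul]
    exact ne_top_of_le_ne_top hfin (measure_mono diff_subset)

lemma integral_eq (n : ℕ) (y : V n) (A : Set (V n)) :
    (∫ x in A, ‖x - y‖⁻¹) = (K n y A).toReal := by
  rw [K, integral_eq_lintegral_of_nonneg_ae
    (ae_of_all _ fun x => inv_nonneg.2 (norm_nonneg _))
    (meas_f n y).aestronglyMeasurable]

end Stmt11Aux

namespace Stmt11Aux

lemma gap (n : ℕ) (hn : 2 ≤ n) {ε : ℝ} (hε : 0 < ε) :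
    ∃ γ : ℝ≥0∞, 0 < γ ∧ γ ≠ ∞ ∧ ∀ y : V n, ε ≤ ‖y‖ →
      K n y (ball 0 1) + γ ≤ K n 0 (ball 0 1) := by
  have hNZ : NeZero n := ⟨by omega⟩
  set ε' : ℝ := min (ε/2) 2⁻¹ with hε'def
  have hε'0 : 0 < ε' := lt_min (by linarith) (by norm_num)
  have hε'le : ε' ≤ ε/2 := min_le_left _ _
  have hε'half : ε' ≤ 2⁻¹ := min_le_right _ _
  set θ : ℝ := ε'/2 with hθdef
  set ρ : ℝ := θ/2 with hρdef
  have hθ0 : 0 < θ := by positivity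
  have hρ0 : 0 < ρ := by positivity
  have hθ1 : θ < 1 := by
    rw [hθdef]; nlinarith
  set ω := volume (ball (0 : V n) 1) with hωdef
  set κ := volume (ball (0 : V n) ρ) with hκdef
  set T : Set ℝ := Ioo ((1+ε')⁻¹) 1 with hTdef
  have hTmeas : MeasurableSet T := measurableSet_Ioo
  have hTsub : T ⊆ Ioi (0:ℝ) := fun t ht => lt_trans (by positivity) ht.1
  have hTvol : volume T = ENNReal.ofReal (1 - (1+ε')⁻¹) := Real.volume_Ioo
  have hTpos : 0 < volume T := by
    rw [hTvol]
    refine ENNReal.ofReal_pos.2 ?_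
    have : (1+ε')⁻¹ < 1 := by
      rw [inv_lt_one_iff₀]; right; linarith
    linarith
  have hκ0 : 0 < κ := measure_ball_pos volume _ hρ0
  refine ⟨κ * volume T, ENNReal.mul_pos hκ0.ne' hTpos.ne', 
    ENNReal.mul_ne_top measure_ball_lt_top.ne (by rw [hTvol]; exact ENNReal.ofReal_ne_top), ?_⟩
  intro y hy
  have hy0 : 0 < ‖y‖ := lt_of_lt_of_le hε hy
  set z : V n := -((1 - θ)/‖y‖) • y with hzdef
  have hdivnn : 0 ≤ (1 - θ)/‖y‖ := div_nonneg (by linarith) hy0.le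
  have hz : ‖z‖ = 1 - θ := by
    rw [hzdef, norm_smul, Real.norm_eq_abs, abs_neg, abs_of_nonneg hdivnn,
      div_mul_cancel₀ _ hy0.ne']
  have hzy : ‖z - y‖ = ‖y‖ + (1 - θ) := by
    have h1 : z - y = (-((1 - θ)/‖y‖) - 1) • y := by
      rw [hzdef]; module
    rw [h1, norm_smul, Real.norm_eq_abs]
    have h2 : |(-((1 - θ)/‖y‖) - 1)| = (1 - θ)/‖y‖ + 1 := by
      rw [abs_of_nonpos (by linarith)]
      ring
    rw [h2, add_mul, div_mul_cancel₀ _ hy0.ne', one_mul]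
    ring
  have hsub : ball z ρ ⊆ ball (0 : V n) 1 := by
    intro w hw
    rw [mem_ball, dist_eq_norm] at hw ⊢
    calc ‖w - 0‖ = ‖(w - z) + z‖ := by rw [sub_zero, sub_add_cancel]
    _ ≤ ‖w - z‖ + ‖z‖ := norm_add_le _ _
    _ < ρ + (1 - θ) := by rw [hz]; linarith
    _ ≤ 1 := by rw [hρdef]; linarith
  have hκball : volume (ball z ρ) = κ := Measure.addHaar_ball_center _ _ _
  have hκle : κ ≤ ω := by rw [← hκball]; exact measure_mono hsub
  have hdisj : ∀ t ∈ T, {x : V n | t < ‖x - y‖⁻¹} ∩ ball 0 1 ⊆ ball (0:V n) 1 \ ball z ρ := by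
    intro t ht x hx
    have ht0 : 0 < t := hTsub ht
    have htinv : t⁻¹ < 1 + ε' := by
      have := inv_strictAnti₀ (by positivity : (0:ℝ) < (1+ε')⁻¹) ht.1
      rwa [inv_inv] at this
    refine ⟨hx.2, fun hxz => ?_⟩
    have hxy : ‖x - y‖ < t⁻¹ := by
      have := subset_ball y ht0 hx.1
      rwa [mem_ball, dist_eq_norm] at this
    rw [mem_ball, dist_eq_norm] at hxz
    have htri : ‖z - y‖ ≤ ‖x - z‖ + ‖x - y‖ := by
      calc ‖z - y‖ = ‖(x - y) - (x - z)‖ := by abel_nf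
      _ ≤ ‖x - y‖ + ‖x - z‖ := norm_sub_le _ _
      _ = ‖x - z‖ + ‖x - y‖ := by ring
    rw [hzy] at htri
    have hρθ : ρ + θ ≤ ε' := by rw [hρdef, hθdef]; linarith
    have : ε ≤ 2 * ε' := by linarith
    linarith
  -- pointwise tail-measure inequality
  have ptwise : ∀ t ∈ Ioi (0:ℝ),
      volume ({x : V n | t < ‖x - y‖⁻¹} ∩ ball 0 1) + T.indicator (fun _ => κ) t
        ≤ volume ({x : V n | t < ‖x - (0:V n)‖⁻¹} ∩ ball 0 1) := by
    intro t ht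
    rw [mem_Ioi] at ht
    have hmin : volume (ball (0:V n) (min 1 t⁻¹))
        ≤ volume ({x : V n | t < ‖x - (0:V n)‖⁻¹} ∩ ball 0 1) := by
      have hsub2 : ball (0:V n) (min 1 t⁻¹) \ {0}
          ⊆ {x : V n | t < ‖x - (0:V n)‖⁻¹} ∩ ball 0 1 := by
        intro x hx
        have hx1 : ‖x‖ < min 1 t⁻¹ := by
          have := hx.1; rwa [mem_ball_zero_iff] at this
        have hx0 : 0 < ‖x‖ := norm_pos_iff.2 (by simpa using hx.2)
        constructor
        · show t < ‖x - 0‖⁻¹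
          rw [sub_zero]
          have := inv_strictAnti₀ hx0 (hx1.trans_le (min_le_right _ _))
          rwa [inv_inv] at this
        · rw [mem_ball_zero_iff]
          exact hx1.trans_le (min_le_left _ _)
      calc volume (ball (0:V n) (min 1 t⁻¹)) = volume (ball (0:V n) (min 1 t⁻¹) \ {0}) :=
            (measure_diff_null (measure_singleton _)).symm
      _ ≤ _ := measure_mono hsub2
    by_cases htT : t ∈ T
    · rw [indicator_of_mem htT]
      have h1t : 1 < t⁻¹ := by
        have h := htT.2
        have := inv_strictAnti₀ ht h
        rwa [inv_one] at this
      have hminT : min (1:ℝ) t⁻¹ = 1 := min_eq_left h1t.le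
      have hrhs : ω ≤ volume ({x : V n | t < ‖x - (0:V n)‖⁻¹} ∩ ball 0 1) := by
        rw [hωdef]
        calc volume (ball (0:V n) 1) = volume (ball (0:V n) (min 1 t⁻¹)) := by rw [hminT]
        _ ≤ _ := hmin
      have hlhs : volume ({x : V n | t < ‖x - y‖⁻¹} ∩ ball 0 1) ≤ ω - κ := by
        calc volume ({x : V n | t < ‖x - y‖⁻¹} ∩ ball 0 1)
            ≤ volume (ball (0:V n) 1 \ ball z ρ) := measure_mono (hdisj t htT)
        _ = ω - κ := by
            rw [measure_diff hsub measurableSet_ball.nullMeasurableSet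
              measure_ball_lt_top.ne, hκball]
      calc volume ({x : V n | t < ‖x - y‖⁻¹} ∩ ball 0 1) + κ ≤ (ω - κ) + κ :=
            add_le_add_left hlhs κ
      _ = ω := tsub_add_cancel_of_le hκle
      _ ≤ _ := hrhs
    · rw [indicator_of_notMem htT, add_zero]
      refine le_trans ?_ hmin
      rcases le_total (1:ℝ) t⁻¹ with h | h
      · rw [min_eq_left h]
        exact measure_mono inter_subset_right
      · rw [min_eq_right h]
        calc volume ({x : V n | t < ‖x - y‖⁻¹} ∩ ball 0 1)
            ≤ volume (ball y t⁻¹) := measure_mono (inter_subset_left.trans (subset_ball y ht))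
        _ = volume (ball (0:V n) t⁻¹) := Measure.addHaar_ball_center _ _ _
  -- assemble via layer cake
  rw [layercake n y _ measurableSet_ball, layercake n 0 _ measurableSet_ball]
  have hind : κ * volume T = ∫⁻ t in Ioi (0:ℝ), T.indicator (fun _ => κ) t := by
    rw [lintegral_indicator hTmeas, setLIntegral_const, Measure.restrict_apply hTmeas,
      inter_eq_self_of_subset_left hTsub]
  rw [hind, ← lintegral_add_right _ (measurable_const.indicator hTmeas)]
  refine lintegral_mono_ae ?_
  filter_upwards [ae_restrict_mem measurableSet_Ioi] with t ht
  exact ptwise t ht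

end Stmt11Aux


open Stmt11Aux in
theorem stmt11 (n : ℕ) (hn : 2 ≤ n) (R₀ : ℝ) (hR : 0 < R₀) (ε : ℝ) (hε : 0 < ε) :
    ∃ δ > (0 : ℝ), ∀ F : Set (V n), MeasurableSet F → F ⊆ ball 0 R₀ →
      (volume (symmDiff F (ball 0 1))).toReal < δ →
      ∀ yF : V n, (∀ y : V n, (∫ x in F, ‖x - y‖⁻¹) ≤ ∫ x in F, ‖x - yF‖⁻¹) →
        ‖yF‖ < ε := by
  have hNZ : NeZero n := ⟨by omega⟩
  obtain ⟨γ, hγ0, hγfin, hγ⟩ := gap n hn hε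
  set ω := volume (ball (0 : V n) 1) with hωdef
  have hωfin : ω ≠ ∞ := measure_ball_lt_top.ne
  have hγR : 0 < γ.toReal := ENNReal.toReal_pos hγ0.ne' hγfin
  set ρ₀ : ℝ := min 1 (γ.toReal / (4 * ω.toReal + 1)) with hρ₀def
  have hρ₀0 : 0 < ρ₀ := lt_min one_pos (by positivity)
  have hρ₀1 : ρ₀ ≤ 1 := min_le_left _ _
  refine ⟨(volume (ball (0 : V n) ρ₀)).toReal, ?_, ?_⟩
  · exact ENNReal.toReal_pos (measure_ball_pos volume _ hρ₀0).ne' measure_ball_lt_top.ne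
  intro F hF hFsub hFδ yF hmax
  by_contra hcon
  push_neg at hcon
  -- the symmetric difference
  set D : Set (V n) := symmDiff F (ball 0 1) with hDdef
  have hDmeas : MeasurableSet D := hF.symmDiff measurableSet_ball
  have hDfin : volume D ≠ ∞ := by
    have : D ⊆ F ∪ ball 0 1 := symmDiff_le_sup
    refine ne_top_of_le_ne_top ?_ (measure_mono this)
    exact (measure_union_lt_top (lt_of_le_of_lt (measure_mono hFsub) measure_ball_lt_top)
      measure_ball_lt_top).ne
  have hDsmall : volume D ≤ volume (ball (0 : V n) ρ₀) := by
    refine le_of_lt ?_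
    rw [← ENNReal.toReal_lt_toReal hDfin measure_ball_lt_top.ne]
    exact hFδ
  have hFfin : volume F ≠ ∞ :=
    ne_top_of_le_ne_top measure_ball_lt_top.ne (measure_mono hFsub)
  -- key bounds
  set ηE : ℝ≥0∞ := 2 * ω * ENNReal.ofReal ρ₀ with hηEdef
  have hηEfin : ηE ≠ ∞ := ENNReal.mul_ne_top (ENNReal.mul_ne_top (by simp) hωfin) (by simp)
  have hKD : ∀ y : V n, K n y D ≤ ηE := fun y => K_le_of_small n hn y hρ₀0 hρ₀1 hDmeas hDsmall
  have hFB : F ⊆ ball (0:V n) 1 ∪ D := by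
    intro x hx
    rcases em (x ∈ ball (0:V n) 1) with h | h
    · exact Or.inl h
    · exact Or.inr (Or.inl ⟨hx, h⟩)
  have hBF : ball (0:V n) 1 ⊆ F ∪ D := by
    intro x hx
    rcases em (x ∈ F) with h | h
    · exact Or.inl h
    · exact Or.inr (Or.inr ⟨hx, h⟩)
  have h1 : K n 0 (ball 0 1) ≤ K n 0 F + ηE :=
    le_trans (le_trans (K_mono n 0 hBF) (K_union_le n 0 F D)) (add_le_add_right (hKD 0) _)
  have h2 : K n 0 F ≤ K n yF F := by
    have hreal := hmax 0
    rw [integral_eq n 0 F, integral_eq n yF F] at hreal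
    exact (ENNReal.toReal_le_toReal (K_ne_top n hn 0 hF hFfin)
      (K_ne_top n hn yF hF hFfin)).1 hreal
  have h3 : K n yF F ≤ K n yF (ball 0 1) + ηE :=
    le_trans (le_trans (K_mono n yF hFB) (K_union_le n yF _ D)) (add_le_add_right (hKD yF) _)
  have h4 : K n yF (ball 0 1) + γ ≤ K n 0 (ball 0 1) := hγ yF hcon
  have hKBfin : K n 0 (ball (0:V n) 1) ≠ ∞ :=
    K_ne_top n hn 0 measurableSet_ball measure_ball_lt_top.ne
  have hchain : K n 0 (ball (0:V n) 1) + γ ≤ K n 0 (ball (0:V n) 1) + (ηE + ηE) := by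
    calc K n 0 (ball (0:V n) 1) + γ ≤ (K n 0 F + ηE) + γ := add_le_add_left h1 γ
    _ ≤ (K n yF F + ηE) + γ := add_le_add_left (add_le_add_left h2 ηE) γ
    _ ≤ ((K n yF (ball 0 1) + ηE) + ηE) + γ :=
        add_le_add_left (add_le_add_left h3 ηE) γ
    _ = (K n yF (ball 0 1) + γ) + (ηE + ηE) := by ring
    _ ≤ K n 0 (ball (0:V n) 1) + (ηE + ηE) := add_le_add_left h4 _
  have hγle : γ ≤ ηE + ηE := (ENNReal.add_le_add_iff_left hKBfin).1 hchain
  -- contradiction numerically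
  have hηER : (ηE + ηE).toReal = 4 * ω.toReal * ρ₀ := by
    rw [hηEdef]
    rw [ENNReal.toReal_add hηEfin hηEfin, ENNReal.toReal_mul, ENNReal.toReal_mul,
      ENNReal.toReal_ofReal hρ₀0.le]
    norm_num
    ring
  have hlast : γ.toReal ≤ 4 * ω.toReal * ρ₀ := by
    rw [← hηER]
    exact ENNReal.toReal_mono (ENNReal.add_ne_top.2 ⟨hηEfin, hηEfin⟩) hγle
  have hρsmall : 4 * ω.toReal * ρ₀ < γ.toReal := by
    have h5 : ρ₀ ≤ γ.toReal / (4 * ω.toReal + 1) := min_le_right _ _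
    have h6 : 0 ≤ ω.toReal := ENNReal.toReal_nonneg
    calc 4 * ω.toReal * ρ₀ ≤ 4 * ω.toReal * (γ.toReal / (4 * ω.toReal + 1)) := by nlinarith
    _ < γ.toReal := by
        have hb : (0:ℝ) < 4 * ω.toReal + 1 := by positivity
        have he : 4 * ω.toReal * (γ.toReal / (4 * ω.toReal + 1))
            = 4 * ω.toReal * γ.toReal / (4 * ω.toReal + 1) := by ring
        rw [he, div_lt_iff₀ hb]
        nlinarith
  linarith
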